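/- Let G be an abelian group and σ : G → G a group endomorphism that is confined, i.e. the set {x ∈ G : σ^m(x) = x} is finite for every integer m ≥ 1. Let Γ be a finite subgroup of the automorphism group of G, and let α : Γ → Γ be an injective map such that σ ∘ γ = α(γ) ∘ σ for every γ ∈ Γ. Then for every integer n ≥ 1 and every γ ∈ Γ, the set {x ∈ G : σ^n(x) = γ(x)} is finite. -/

import Mathlib

/-- If σ is a confined endomorphism of an abelian group G, Γ a finite subgroup of Aut(G),
and α : Γ → Γ an injective map with σ ∘ γ = α(γ) ∘ σ, then for every n ≥ 1 and γ ∈ Γ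
the set {x : σⁿ(x) = γ(x)} is finite. -/
theorem confined_twisted_fixed_points_finite {G : Type*} [AddCommGroup G]
    (σ : AddMonoid.End G)
    (hconf : ∀ m : ℕ, 1 ≤ m → {x : G | (σ ^ m) x = x}.Finite)
    (Γ : AddSubgroup (AddAut G)) (hΓfin : (Γ : Set (AddAut G)).Finite)
    (α : Γ → Γ) (hα : Function.Injective α)
    (hcomm : ∀ γ : Γ, ∀ x : G, σ ((γ : AddAut G) x) = ((α γ : AddAut G)) (σ x)) :
    ∀ n : ℕ, 1 ≤ n → ∀ γ : Γ, {x : G | (σ ^ n) x = (γ : AddAut G) x}.Finite := by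
  have hfin : Finite Γ := hΓfin.to_subtype
  -- α is a bijection on the finite set Γ
  have hbij : Function.Bijective α := Finite.injective_iff_bijective.mp hα
  set e : Equiv.Perm Γ := Equiv.ofBijective α hbij with he
  have hecoe : ⇑e = α := rfl
  set P : ℕ := orderOf e with hPdef
  have hPpos : 0 < P := orderOf_pos e
  have hPid : α^[P] = id := by
    have : e ^ P = 1 := pow_orderOf_eq_one e
    have h2 : ⇑(e ^ P) = ⇑(1 : Equiv.Perm Γ) := by rw [this]
    rwa [Equiv.Perm.coe_pow, hecoe, Equiv.Perm.coe_one] at h2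
  -- iterated intertwining
  have key1 : ∀ m : ℕ, ∀ δ : Γ, ∀ x : G,
      (σ ^ m) ((δ : AddAut G) x) = ((α^[m] δ : Γ) : AddAut G) ((σ ^ m) x) := by
    intro m
    induction m with
    | zero => intro δ x; simp
    | succ m ih =>
      intro δ x
      have h1 : (σ ^ (m + 1)) = σ * σ ^ m := (pow_succ' σ m)
      rw [h1]
      show σ ((σ ^ m) ((δ : AddAut G) x)) = _
      rw [ih δ x, hcomm, Function.iterate_succ_apply']
      rfl
  intro n hn γ
  -- the cocycle
  set c : ℕ → Γ := fun k => Nat.rec 0 (fun k ck => α^[n*k] γ + ck) k with hc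
  have hc0 : c 0 = 0 := rfl
  have hcs : ∀ k, c (k+1) = α^[n*k] γ + c k := fun k => rfl
  have key2 : ∀ x : G, (σ ^ n) x = (γ : AddAut G) x →
      ∀ k : ℕ, (σ ^ (n*k)) x = ((c k : Γ) : AddAut G) x := by
    intro x hx k
    induction k with
    | zero => simp [hc0]
    | succ k ih =>
      have h1 : σ ^ (n*(k+1)) = σ ^ (n*k) * σ ^ n := by
        rw [← pow_add]; ring_nf
      rw [h1]
      show (σ ^ (n*k)) ((σ ^ n) x) = _
      rw [hx, key1, ih, hcs]
      push_cast [AddSubgroup.coe_add]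
      rfl
  -- periodicity of the twisting
  have hnPid : α^[n*P] = id := by
    rw [mul_comm, Function.iterate_mul, hPid, Function.iterate_id]
  have hβ : ∀ k : ℕ, α^[n*(k+P)] γ = α^[n*k] γ := by
    intro k
    rw [Nat.mul_add, Function.iterate_add_apply, hnPid]
    simp
  have hcadd : ∀ j : ℕ, c (j + P) = c j + c P := by
    intro j
    induction j with
    | zero => simp [hc0]
    | succ j ih =>
      have : j + 1 + P = (j + P) + 1 := by ring
      rw [this, hcs, ih, hβ, hcs, add_assoc]
  have hcpow : ∀ t : ℕ, c (t * P) = t • (c P) := by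
    intro t
    induction t with
    | zero => simp [hc0]
    | succ t ih =>
      have : (t + 1) * P = t * P + P := by ring
      rw [this, hcadd, ih, succ_nsmul]
  set t : ℕ := addOrderOf (c P) with htdef
  have htpos : 0 < t := addOrderOf_pos (c P)
  have hct : c (t * P) = 0 := by rw [hcpow, addOrderOf_nsmul_eq_zero]
  have hm : 1 ≤ n * (t * P) := by
    have := Nat.mul_pos htpos hPpos
    exact Nat.one_le_iff_ne_zero.mpr (by positivity)
  apply (hconf (n * (t * P)) hm).subset
  intro x hx
  have := key2 x hx (t * P)
  rw [hct] at this
  simpa using this
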